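/- Let 0 < P₂ < P₁ < 1, let ε ∈ (0,1), let z > 0, and let β be a positive integer with β ≥ ln(1/ε)·(1+z)² / (2·(P₁ − P₂)²). Set μ = ((z·P₁ + P₂)/(1+z))·β. If X₁,…,X_β are independent identically distributed {0,1}-valued random variables with Pr[X_i = 1] = p₁ for some p₁ ≥ P₁, then Pr[ ∑_{i=1}^β X_i < μ ] ≤ ε. -/

import Mathlib

open MeasureTheory ProbabilityTheory Real

theorem bern_mgf_le (p t : ℝ) (hp0 : 0 ≤ p) (hp1 : p ≤ 1) (ht : t ≤ 0) :
    1 - p + p * exp t ≤ exp (p * t + t ^ 2 / 8) := by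
  have hden : ∀ s : ℝ, 0 < 1 - p + p * exp s := by
    intro s
    rcases eq_or_lt_of_le hp0 with h | h
    · simp [← h]
    · have : 0 < p * exp s := mul_pos h (exp_pos s)
      linarith
  have hd : ∀ s : ℝ, HasDerivAt (fun s => 1 - p + p * exp s) (p * exp s) s := fun s =>
    ((hasDerivAt_exp s).const_mul p).const_add (1 - p)
  set g : ℝ → ℝ := fun s => p * exp s / (1 - p + p * exp s) with hg_def
  have hf : ∀ s : ℝ, HasDerivAt (fun s => Real.log (1 - p + p * exp s)) (g s) s := fun s =>
    (hd s).log (hden s).ne'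
  have hg : ∀ s : ℝ, HasDerivAt g
      ((p * exp s * (1 - p + p * exp s) - p * exp s * (p * exp s)) / (1 - p + p * exp s) ^ 2) s :=
    fun s => ((hasDerivAt_exp s).const_mul p).div (hd s) (hden s).ne'
  have hg_le : ∀ s : ℝ,
      (p * exp s * (1 - p + p * exp s) - p * exp s * (p * exp s)) / (1 - p + p * exp s) ^ 2
        ≤ 1 / 4 := by
    intro s
    rw [div_le_div_iff₀ (pow_pos (hden s) 2) (by norm_num : (0:ℝ) < 4)]
    nlinarith [exp_pos s, sq_nonneg (p * exp s - (1 - p))]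
  have step1 : ∀ s : ℝ, s ≤ 0 → p + s / 4 ≤ g s := by
    have hanti : Antitone (fun s => g s - s / 4) := by
      refine antitone_of_deriv_nonpos
        (fun s => ((hg s).sub ((hasDerivAt_id' s).div_const 4)).differentiableAt) ?_
      intro s
      rw [((hg s).fun_sub ((hasDerivAt_id' s).div_const 4)).deriv]
      have := hg_le s
      linarith
    intro s hs
    have := hanti hs
    have hg0 : g 0 = p := by simp [hg_def]
    simp only [hg0] at this
    linarith [this]
  have step2 : Real.log (1 - p + p * exp t) ≤ p * t + t ^ 2 / 8 := by
    set k : ℝ → ℝ := fun s => Real.log (1 - p + p * exp s) - (p * s + s ^ 2 / 8) with hk_def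
    have hk : ∀ s : ℝ, HasDerivAt k (g s - (p + s / 4)) s := by
      intro s
      have h2 : HasDerivAt (fun s : ℝ => p * s + s ^ 2 / 8) (p + 2 * s / 8) s := by
        have := ((hasDerivAt_id s).const_mul p).fun_add (((hasDerivAt_pow 2 s)).div_const 8)
        simpa using this
      have := (hf s).fun_sub h2
      exact this.congr_deriv (by ring)
    have hmono : MonotoneOn k (Set.Iic 0) := by
      refine monotoneOn_of_deriv_nonneg (convex_Iic 0) ?_
        (fun s _ => (hk s).differentiableAt.differentiableWithinAt) ?_
      · exact fun s _ => (hk s).differentiableAt.continuousAt.continuousWithinAt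
      · intro s hs
        rw [interior_Iic] at hs
        rw [(hk s).deriv]
        have := step1 s (le_of_lt hs)
        linarith
    have h0 : k 0 = 0 := by simp [hk_def]
    have := hmono (Set.mem_Iic.mpr ht) (Set.mem_Iic.mpr le_rfl) ht
    rw [h0] at this
    simpa [hk_def, sub_nonpos] using this
  calc 1 - p + p * exp t = exp (Real.log (1 - p + p * exp t)) := (exp_log (hden t)).symm
    _ ≤ exp (p * t + t ^ 2 / 8) := exp_le_exp.mpr step2

theorem near_point_is_frequent
    (P₁ P₂ ε z : ℝ) (hP₂ : 0 < P₂) (hP₁₂ : P₂ < P₁) (hP₁ : P₁ < 1)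
    (hε : ε ∈ Set.Ioo (0 : ℝ) 1) (hz : 0 < z)
    (β : ℕ) (hβpos : 0 < β)
    (hβ : Real.log (1 / ε) * (1 + z) ^ 2 / (2 * (P₁ - P₂) ^ 2) ≤ (β : ℝ))
    (Ω : Type*) [MeasurableSpace Ω] (μ : Measure Ω) [IsProbabilityMeasure μ]
    (X : Fin β → Ω → ℝ) (hXmeas : ∀ i, Measurable (X i))
    (hX01 : ∀ i ω, X i ω = 0 ∨ X i ω = 1)
    (hindep : iIndepFun X μ)
    (p₁ : ℝ) (hp₁ : P₁ ≤ p₁)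
    (hdist : ∀ i, μ {ω | X i ω = 1} = ENNReal.ofReal p₁) :
    μ {ω | (∑ i, X i ω) < ((z * P₁ + P₂) / (1 + z)) * (β : ℝ)} ≤ ENNReal.ofReal ε := by
  obtain ⟨hε0, hε1⟩ := hε
  have hz1 : (0:ℝ) < 1 + z := by linarith
  have hp₁0 : 0 < p₁ := lt_of_lt_of_le (hP₂.trans hP₁₂) hp₁
  -- p₁ ≤ 1
  have hp₁1 : p₁ ≤ 1 := by
    have h := hdist ⟨0, hβpos⟩
    have : ENNReal.ofReal p₁ ≤ 1 := h ▸ prob_le_one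
    exact_mod_cast (ENNReal.ofReal_le_one.mp this)
  set a : ℝ := (P₁ - P₂) / (1 + z) with ha_def
  have ha : 0 < a := div_pos (by linarith) hz1
  set t : ℝ := -(4 * a) with ht_def
  have ht : t ≤ 0 := by simp [ht_def]; positivity
  set m : ℝ := ((z * P₁ + P₂) / (1 + z)) * (β : ℝ) with hm_def
  -- measurable indicator sets
  have hSmeas : ∀ i, MeasurableSet {ω | X i ω = 1} := fun i =>
    hXmeas i (measurableSet_singleton 1)
  have hXind : ∀ i, X i = Set.indicator {ω | X i ω = 1} (fun _ => (1:ℝ)) := by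
    intro i
    funext ω
    rcases hX01 i ω with h | h <;>
      simp [Set.indicator_apply, Set.mem_setOf_eq, h]
  have hXint : ∀ i, Integrable (X i) μ := by
    intro i
    rw [hXind i]
    exact (integrable_const (1:ℝ)).indicator (hSmeas i)
  have hexp_eq : ∀ i, (fun ω => exp (t * X i ω)) = fun ω => 1 + (exp t - 1) * X i ω := by
    intro i
    funext ω
    rcases hX01 i ω with h | h <;> simp [h]
  have hint : ∀ i, Integrable (fun ω => exp (t * X i ω)) μ := by
    intro i
    rw [hexp_eq i]
    exact (integrable_const 1).add ((hXint i).const_mul _)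
  -- integral of X i
  have hEX : ∀ i, ∫ ω, X i ω ∂μ = p₁ := by
    intro i
    rw [show (fun ω => X i ω) = X i from rfl, hXind i, integral_indicator_const _ (hSmeas i),
      measureReal_def, hdist i, smul_eq_mul, mul_one, ENNReal.toReal_ofReal hp₁0.le]
  -- per-variable mgf
  have hmgf : ∀ i, mgf (X i) μ t = 1 - p₁ + p₁ * exp t := by
    intro i
    rw [mgf, hexp_eq i, integral_add (integrable_const 1) ((hXint i).const_mul _),
      integral_const, integral_const_mul, hEX i]
    simp [measure_univ]
    ring
  have hmgf_le : ∀ i, mgf (X i) μ t ≤ exp (p₁ * t + t ^ 2 / 8) := fun i =>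
    (hmgf i) ▸ bern_mgf_le p₁ t hp₁0.le hp₁1 ht
  -- Chernoff
  have hintS : Integrable (fun ω => exp (t * (∑ i, X i) ω)) μ :=
    hindep.integrable_exp_mul_sum hXmeas (fun i _ => hint i)
  have hch := measure_le_le_exp_mul_mgf (X := ∑ i, X i) (μ := μ) m ht hintS
  have hprod : mgf (∑ i, X i) μ t ≤ exp ((β : ℝ) * (p₁ * t + t ^ 2 / 8)) := by
    rw [hindep.mgf_sum hXmeas Finset.univ]
    calc ∏ i, mgf (X i) μ t ≤ ∏ _i : Fin β, exp (p₁ * t + t ^ 2 / 8) :=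
          Finset.prod_le_prod (fun i _ => mgf_nonneg) (fun i _ => hmgf_le i)
      _ = exp ((β : ℝ) * (p₁ * t + t ^ 2 / 8)) := by
          rw [Finset.prod_const, ← Real.exp_nat_mul]
          simp
  -- numeric exponent bound
  have hnum : -t * m + (β : ℝ) * (p₁ * t + t ^ 2 / 8) ≤ Real.log ε := by
    have hlog : -Real.log ε * (1 + z) ^ 2 ≤ (β : ℝ) * (2 * (P₁ - P₂) ^ 2) := by
      have h2 : (0:ℝ) < 2 * (P₁ - P₂) ^ 2 := by nlinarith
      rw [div_le_iff₀ h2] at hβ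
      calc -Real.log ε * (1 + z) ^ 2 = Real.log (1/ε) * (1 + z) ^ 2 := by
            rw [one_div, Real.log_inv]
        _ ≤ (β : ℝ) * (2 * (P₁ - P₂) ^ 2) := hβ
    have hgap : a * (β : ℝ) ≤ (β : ℝ) * p₁ - m := by
      have : m = (β : ℝ) * P₁ - a * (β : ℝ) := by
        rw [hm_def, ha_def]
        field_simp
        ring
      have hβ0 : (0:ℝ) ≤ (β : ℝ) := Nat.cast_nonneg β
      nlinarith
    have hexpand : -t * m + (β : ℝ) * (p₁ * t + t ^ 2 / 8) =
        -(4 * a) * ((β : ℝ) * p₁ - m) + 2 * a ^ 2 * (β : ℝ) := by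
      rw [ht_def]; ring
    have key : -(4 * a) * ((β : ℝ) * p₁ - m) + 2 * a ^ 2 * (β : ℝ) ≤ -(2 * a ^ 2 * (β : ℝ)) := by
      nlinarith
    have hfin : -(2 * a ^ 2 * (β : ℝ)) ≤ Real.log ε := by
      have ha2 : a ^ 2 = (P₁ - P₂) ^ 2 / (1 + z) ^ 2 := by
        rw [ha_def, div_pow]
      have hz2 : (0:ℝ) < (1 + z) ^ 2 := by positivity
      rw [ha2, neg_le]
      rw [show 2 * ((P₁ - P₂) ^ 2 / (1 + z) ^ 2) * (β:ℝ)
            = ((β:ℝ) * (2 * (P₁ - P₂) ^ 2)) / (1 + z) ^ 2 by ring]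
      rw [le_div_iff₀ hz2]
      linarith [hlog]
    linarith [hexpand ▸ key.trans hfin]
  -- assemble
  have hreal : (μ {ω | (∑ i, X i) ω ≤ m}).toReal ≤ ε := by
    calc (μ {ω | (∑ i, X i) ω ≤ m}).toReal
        ≤ exp (-t * m) * mgf (∑ i, X i) μ t := hch
      _ ≤ exp (-t * m) * exp ((β : ℝ) * (p₁ * t + t ^ 2 / 8)) := by
          exact mul_le_mul_of_nonneg_left hprod (exp_pos _).le
      _ = exp (-t * m + (β : ℝ) * (p₁ * t + t ^ 2 / 8)) := (Real.exp_add _ _).symm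
      _ ≤ exp (Real.log ε) := exp_le_exp.mpr hnum
      _ = ε := exp_log hε0
  have hsub : {ω | (∑ i, X i ω) < m} ⊆ {ω | (∑ i, X i) ω ≤ m} := by
    intro ω hω
    simp only [Set.mem_setOf_eq, Finset.sum_apply]
    exact le_of_lt hω
  rw [ENNReal.le_ofReal_iff_toReal_le (measure_ne_top μ _) hε0.le]
  exact le_trans (ENNReal.toReal_mono (measure_ne_top μ _) (measure_mono hsub)) hreal
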